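/- Over the alphabet A = {0,1,2} the code C = {0000, 0111, 1012, 1120, 2021} ⊆ A^4 of size 5 is 1-error correctable for the network N_2, and no code C' ⊆ A^4 of size 6 over a 3-element alphabet is 1-error correctable for N_2; hence σ(N_2, 3) = 5. -/

import Mathlib

open Finset

/-- The "fan" of a codeword `c` under the network code `(F1, F2)` for the network `N_s`:
the set of possible outputs at the terminal when the adversary changes at most one
of the `s+2` symbols sent by the source. -/
def fan {A : Type*} [Fintype A] [DecidableEq A] (s : ℕ)
    (F1 : A → A) (F2 : (Fin (s + 1) → A) → Fin s → A)
    (c : Fin (s + 2) → A) : Finset (A × (Fin s → A)) :=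
  (Finset.univ.filter fun x : Fin (s + 2) → A => hammingDist x c ≤ 1).image
    fun x => (F1 (x 0), F2 fun i => x i.succ)

/-- A code `C ⊆ A^{s+2}` is 1-error correctable for the network `N_s` if there are
functions `F1 : A → A` and `F2 : A^{s+1} → A^s` such that the fans of distinct
codewords are disjoint. -/
def OneErrCorr {A : Type*} [Fintype A] [DecidableEq A] (s : ℕ)
    (C : Finset (Fin (s + 2) → A)) : Prop :=
  ∃ (F1 : A → A) (F2 : (Fin (s + 1) → A) → Fin s → A),
    ∀ c ∈ C, ∀ c' ∈ C, c ≠ c' → Disjoint (fan s F1 F2 c) (fan s F1 F2 c')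

/-- `tau s C c2` is the set of codewords of `C` whose last `s+1` coordinates are at
Hamming distance at most 1 from `c2`. -/
def tau {A : Type*} [Fintype A] [DecidableEq A] (s : ℕ)
    (C : Finset (Fin (s + 2) → A)) (c2 : Fin (s + 1) → A) :
    Finset (Fin (s + 2) → A) :=
  C.filter fun c => hammingDist c2 (fun i => c i.succ) ≤ 1

/-- The code of Example 1/2 over the ternary alphabet. -/
def exampleCode13 : Finset (Fin 4 → Fin 3) :=
  {![0,0,0,0], ![0,1,1,1], ![1,0,1,2], ![1,1,2,0], ![2,0,2,1]}

set_option linter.unusedSectionVars false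

section Aux

variable {A : Type} [Fintype A] [DecidableEq A]

lemma hd_def (n : ℕ) (x y : Fin n → A) :
    hammingDist x y = (univ.filter fun i => x i ≠ y i).card := rfl

lemma three_cover (hA : Fintype.card A = 3) {a b c : A} (x : A)
    (hab : a ≠ b) (hac : a ≠ c) (hbc : b ≠ c) : x = a ∨ x = b ∨ x = c := by
  by_contra h
  push_neg at h
  obtain ⟨hxa, hxb, hxc⟩ := h
  have h4 : ({x, a, b, c} : Finset A).card = 4 := by
    rw [card_insert_of_notMem (by simp [hxa, hxb, hxc]),
      card_insert_of_notMem (by simp [hab, hac]),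
      card_insert_of_notMem (by simp [hbc]), card_singleton]
  have := Finset.card_le_univ ({x, a, b, c} : Finset A)
  rw [h4, hA] at this
  omega

lemma L1 (hA : Fintype.card A = 3) (x y z w : Fin 3 → A)
    (hxy : ∀ i, x i ≠ y i) (hxz : ∀ i, x i ≠ z i) (hyz : ∀ i, y i ≠ z i)
    (hwx : ∀ i, w i ≠ x i)
    (hwy : 2 ≤ hammingDist w y) (hwz : 2 ≤ hammingDist w z) : False := by
  have hdisj : Disjoint (univ.filter fun i => w i ≠ y i)
      (univ.filter fun i => w i ≠ z i) := by
    rw [Finset.disjoint_left]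
    intro i h1 h2
    simp only [mem_filter, mem_univ, true_and] at h1 h2
    rcases three_cover hA (w i) (hxy i) (hxz i) (hyz i) with h | h | h
    · exact hwx i h
    · exact h1 h
    · exact h2 h
  have hcard := Finset.card_union_of_disjoint hdisj
  have hle := Finset.card_le_univ ((univ.filter fun i => w i ≠ y i) ∪
      (univ.filter fun i => w i ≠ z i))
  rw [hcard] at hle
  rw [hd_def] at hwy hwz
  simp only [card_univ, Fintype.card_fin] at hle
  omega

lemma L2 (hA : Fintype.card A = 3) (a b c d : Fin 3 → A)
    (hba : ∀ i, b i ≠ a i) (hca : ∀ i, c i ≠ a i) (hdc : ∀ i, d i ≠ c i)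
    (hdb : ∀ i, d i ≠ b i)
    (hbc : 2 ≤ hammingDist b c) (had : 2 ≤ hammingDist a d) : False := by
  have hdisj : Disjoint (univ.filter fun i => b i ≠ c i)
      (univ.filter fun i => a i ≠ d i) := by
    rw [Finset.disjoint_left]
    intro i h1 h2
    simp only [mem_filter, mem_univ, true_and] at h1 h2
    rcases three_cover hA (d i) ((hba i).symm) ((hca i).symm) h1 with h | h | h
    · exact h2 h.symm
    · exact hdb i h
    · exact hdc i h
  have hcard := Finset.card_union_of_disjoint hdisj
  have hle := Finset.card_le_univ ((univ.filter fun i => b i ≠ c i) ∪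
      (univ.filter fun i => a i ≠ d i))
  rw [hcard] at hle
  rw [hd_def] at hbc had
  simp only [card_univ, Fintype.card_fin] at hle
  omega

lemma hd_eq_three_iff (u v : Fin 3 → A) :
    hammingDist u v = 3 ↔ ∀ i, u i ≠ v i := by
  constructor
  · intro h i
    have : (univ.filter fun i => u i ≠ v i) = univ := by
      apply Finset.eq_univ_of_card
      rw [← hd_def, h, Fintype.card_fin]
    have := this ▸ (mem_univ i)
    exact (Finset.mem_filter.mp this).2
  · intro h
    rw [hd_def, Finset.filter_true_of_mem fun i _ => h i, card_univ, Fintype.card_fin]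

lemma hd_le_three (u v : Fin 3 → A) : hammingDist u v ≤ 3 := by
  have := @hammingDist_le_card_fintype (Fin 3) (fun _ => A) _ _ u v
  simpa using this

lemma midpoint3 (u v : Fin 3 → A) (h : hammingDist u v ≤ 2) :
    ∃ y, hammingDist u y ≤ 1 ∧ hammingDist y v ≤ 1 := by
  by_cases h1 : hammingDist u v ≤ 1
  · exact ⟨v, h1, by simp [hammingDist_self]⟩
  · have hne : u ≠ v := by
      intro he; rw [he, hammingDist_self] at h1; omega
    obtain ⟨i, hi⟩ := Function.ne_iff.mp hne
    refine ⟨Function.update u i (v i), ?_, ?_⟩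
    · rw [hd_def]
      calc (univ.filter fun j => u j ≠ Function.update u i (v i) j).card
          ≤ ({i} : Finset (Fin 3)).card := by
            apply Finset.card_le_card
            intro j hj
            simp only [mem_filter, mem_univ, true_and] at hj
            simp only [mem_singleton]
            by_contra hji
            exact hj (by rw [Function.update_of_ne hji])
        _ = 1 := card_singleton i
    · rw [hd_def]
      have hsub : (univ.filter fun j => Function.update u i (v i) j ≠ v j)
          ⊆ (univ.filter fun j => u j ≠ v j).erase i := by
        intro j hj
        simp only [mem_filter, mem_univ, true_and] at hj
        by_cases hji : j = i
        · subst hji; simp [Function.update_self] at hj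
        · rw [Function.update_of_ne hji] at hj
          exact Finset.mem_erase.mpr ⟨hji, Finset.mem_filter.mpr ⟨mem_univ j, hj⟩⟩
      have hi' : i ∈ (univ.filter fun j => u j ≠ v j) :=
        Finset.mem_filter.mpr ⟨mem_univ i, hi⟩
      have := Finset.card_le_card hsub
      rw [Finset.card_erase_of_mem hi'] at this
      rw [hd_def] at h
      omega

lemma hd_split (x c : Fin 4 → A) :
    hammingDist x c = (if x 0 = c 0 then 0 else 1) +
      hammingDist (fun i : Fin 3 => x i.succ) (fun i : Fin 3 => c i.succ) := by
  rw [hd_def, hd_def, Finset.card_filter, Finset.card_filter]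
  rw [show (univ : Finset (Fin 4)) = (univ : Finset (Fin (3+1))) from rfl]
  rw [Fin.sum_univ_succ]
  congr 1
  by_cases h : x 0 = c 0 <;> simp [h]

lemma mem_fanA (F1 : A → A) (F2 : (Fin 3 → A) → Fin 2 → A) (c : Fin 4 → A) (u : A) :
    (F1 u, F2 (fun i : Fin 3 => c i.succ)) ∈ fan 2 F1 F2 c := by
  refine Finset.mem_image.mpr ⟨Fin.cons u (fun i : Fin 3 => c i.succ),
    Finset.mem_filter.mpr ⟨mem_univ _, ?_⟩, ?_⟩
  · rw [hd_split]
    simp only [Fin.cons_zero, Fin.cons_succ, hammingDist_self]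
    split <;> simp
  · simp [Fin.cons_zero, Fin.cons_succ]

lemma mem_fanB (F1 : A → A) (F2 : (Fin 3 → A) → Fin 2 → A) (c : Fin 4 → A)
    (y : Fin 3 → A) (h : hammingDist y (fun i : Fin 3 => c i.succ) ≤ 1) :
    (F1 (c 0), F2 y) ∈ fan 2 F1 F2 c := by
  refine Finset.mem_image.mpr ⟨Fin.cons (c 0) y,
    Finset.mem_filter.mpr ⟨mem_univ _, ?_⟩, ?_⟩
  · rw [hd_split]
    simp only [Fin.cons_zero, Fin.cons_succ, if_pos rfl]
    simpa using h
  · simp [Fin.cons_zero, Fin.cons_succ]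

end Aux

def F2ex : (Fin 3 → Fin 3) → Fin 2 → Fin 3 := fun y =>
  ![![![![1,1],![0,1],![1,0]], ![![1,0],![0,0],![1,2]], ![![0,1],![2,0],![0,0]]],
    ![![![0,1],![0,0],![0,0]], ![![0,2],![2,1],![0,0]], ![![2,2],![0,2],![0,1]]],
    ![![![0,1],![0,0],![0,0]], ![![0,0],![0,0],![0,0]], ![![0,1],![0,0],![0,0]]]]
    (y 0) (y 1) (y 2)

abbrev tl {A : Type} (c : Fin 4 → A) : Fin 3 → A := fun i => c i.succ

lemma nk1 (n : ℕ) (h1 : n ≤ 3) (h2 : n ≠ 3) : n ≤ 2 := by omega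
lemma nk2 (n : ℕ) (h1 : n ≤ 3) (h2 : ¬ n ≤ 2) : n = 3 := by omega
lemma nk3 (m1 m2 : ℕ) (h : m1 + m2 = 6) (h2 : 3 ≤ m1) (h3 : m1 ≤ 3) : m2 = 3 := by omega
lemma nk4 (a b : ℕ) (h1 : a ≤ 2) (h2 : a + b = 6) (h3 : b ≤ 2 * 2) : a = 2 := by omega
lemma nk5 (a b : ℕ) (h1 : a + b ≤ 3) (h2 : 2 ≤ a) : b ≤ 1 := by omega
lemma nk6 (u m1 m2 : ℕ) (h1 : 6 ≤ u) (h2 : u ≤ m1 + m2) (h3 : m1 = 2) (h4 : m2 = 2) : False := by omega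

set_option maxHeartbeats 1000000 in
lemma neg_part (A : Type) [Fintype A] [DecidableEq A] (hA : Fintype.card A = 3)
    (C' : Finset (Fin 4 → A)) (hC : C'.card = 6) : ¬ OneErrCorr 2 C' := by
  rintro ⟨F1, F2, hdisj⟩
  -- Property P1
  have P1 : ∀ c ∈ C', ∀ c' ∈ C', c ≠ c' → ∀ y : Fin 3 → A,
      hammingDist y (tl c') ≤ 1 → F2 y ≠ F2 (tl c) := by
    intro c hc c' hc' hne y hy heq
    have h1 : (F1 (c' 0), F2 (tl c)) ∈ fan 2 F1 F2 c := mem_fanA F1 F2 c (c' 0)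
    have h2 : (F1 (c' 0), F2 y) ∈ fan 2 F1 F2 c' := mem_fanB F1 F2 c' y hy
    rw [heq] at h2
    exact Finset.disjoint_left.mp (hdisj c hc c' hc' hne) h1 h2
  -- Property P2
  have P2 : ∀ c ∈ C', ∀ c' ∈ C', c ≠ c' → F1 (c 0) = F1 (c' 0) →
      ∀ y y' : Fin 3 → A, hammingDist y (tl c) ≤ 1 → hammingDist y' (tl c') ≤ 1 →
      F2 y ≠ F2 y' := by
    intro c hc c' hc' hne hF y y' hy hy' heq
    have h1 : (F1 (c 0), F2 y) ∈ fan 2 F1 F2 c := mem_fanB F1 F2 c y hy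
    have h2 : (F1 (c' 0), F2 y') ∈ fan 2 F1 F2 c' := mem_fanB F1 F2 c' y' hy'
    rw [← hF, ← heq] at h2
    exact Finset.disjoint_left.mp (hdisj c hc c' hc' hne) h1 h2
  -- pairwise tail distance ≥ 2
  have hd2 : ∀ c ∈ C', ∀ c' ∈ C', c ≠ c' → 2 ≤ hammingDist (tl c) (tl c') := by
    intro c hc c' hc' hne
    by_contra h
    exact P1 c hc c' hc' hne (tl c)
      (Nat.lt_succ_iff.mp (Nat.lt_of_not_le h)) rfl
  -- same F1-head ⇒ tails differ everywhere
  have hd3 : ∀ c ∈ C', ∀ c' ∈ C', c ≠ c' → F1 (c 0) = F1 (c' 0) →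
      ∀ i, tl c i ≠ tl c' i := by
    intro c hc c' hc' hne hF
    rw [← hd_eq_three_iff]
    have hle := hd_le_three (tl c) (tl c')
    by_contra h
    have h2 : hammingDist (tl c) (tl c') ≤ 2 := nk1 _ hle h
    obtain ⟨y, hy1, hy2⟩ := midpoint3 (tl c) (tl c') h2
    rw [hammingDist_comm] at hy1
    exact P2 c hc c' hc' hne hF y y hy1 hy2 rfl
  -- the set of codeword values
  set V : Finset (Fin 2 → A) := C'.image (fun c => F2 (tl c)) with hV
  have hVcard : V.card = 6 := by
    rw [hV, Finset.card_image_of_injOn, hC]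
    intro c hc c' hc' heq
    by_contra hne
    exact P1 c hc c' hc' hne (tl c') (by simp [hammingDist_self]) heq.symm
  have hScard : ((univ : Finset (Fin 2 → A)) \ V).card = 3 := by
    rw [Finset.card_sdiff_of_subset (Finset.subset_univ V), hVcard, card_univ,
      Fintype.card_fun, hA, Fintype.card_fin]
    norm_num
  set S : Finset (Fin 2 → A) := (univ : Finset (Fin 2 → A)) \ V with hS
  -- the D sets
  set D : (Fin 4 → A) → Finset (Fin 2 → A) := fun c =>
    ((univ.filter fun y => hammingDist y (tl c) ≤ 1).image F2) \ V with hD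
  have hDS : ∀ c, D c ⊆ S :=
    fun c => Finset.sdiff_subset_sdiff (Finset.subset_univ _) (le_refl V)
  have hDdisj : ∀ c ∈ C', ∀ c' ∈ C', c ≠ c' → F1 (c 0) = F1 (c' 0) →
      Disjoint (D c) (D c') := by
    intro c hc c' hc' hne hF
    rw [Finset.disjoint_left]
    intro s hs hs'
    obtain ⟨y, hy, hys⟩ := Finset.mem_image.mp (Finset.mem_sdiff.mp hs).1
    obtain ⟨y', hy', hys'⟩ := Finset.mem_image.mp (Finset.mem_sdiff.mp hs').1
    exact P2 c hc c' hc' hne hF y y' (Finset.mem_filter.mp hy).2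
      (Finset.mem_filter.mp hy').2 (hys.trans hys'.symm)
  have hDmeet : ∀ c ∈ C', ∀ k ∈ C', c ≠ k → hammingDist (tl c) (tl k) ≤ 2 →
      ∃ s, s ∈ D c ∧ s ∈ D k := by
    intro c hc k hk hne hle
    obtain ⟨y, hy1, hy2⟩ := midpoint3 (tl c) (tl k) hle
    rw [hammingDist_comm] at hy1
    have hnotV : F2 y ∉ V := by
      intro hmem
      obtain ⟨c'', hc'', heq⟩ := Finset.mem_image.mp hmem
      by_cases hcc : c'' = c
      · exact P1 c'' hc'' k hk (by rw [hcc]; exact hne) y hy2 heq.symm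
      · exact P1 c'' hc'' c hc hcc y hy1 heq.symm
    exact ⟨F2 y, Finset.mem_sdiff.mpr ⟨Finset.mem_image.mpr
        ⟨y, Finset.mem_filter.mpr ⟨mem_univ y, hy1⟩, rfl⟩, hnotV⟩,
      Finset.mem_sdiff.mpr ⟨Finset.mem_image.mpr
        ⟨y, Finset.mem_filter.mpr ⟨mem_univ y, hy2⟩, rfl⟩, hnotV⟩⟩
  -- triple lemma
  have tri : ∀ x ∈ C', ∀ y ∈ C', ∀ z ∈ C', ∀ w ∈ C',
      (∀ i, tl x i ≠ tl y i) → (∀ i, tl x i ≠ tl z i) → (∀ i, tl y i ≠ tl z i) →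
      w ≠ x → w ≠ y → w ≠ z → hammingDist (tl w) (tl x) ≤ 2 := by
    intro x hx y hy z hz w hw hxy hxz hyz hwx hwy hwz
    have hle := hd_le_three (tl w) (tl x)
    by_contra h
    have h3 : hammingDist (tl w) (tl x) = 3 := nk2 _ hle h
    exact L1 hA (tl x) (tl y) (tl z) (tl w) hxy hxz hyz
      ((hd_eq_three_iff _ _).mp h3) (hd2 w hw y hy hwy) (hd2 w hw z hz hwz)
  by_cases hbig : ∃ v : A, 3 ≤ (C'.filter fun c => F1 (c 0) = v).card
  · -- Case A
    obtain ⟨v, hv⟩ := hbig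
    obtain ⟨a, b, c, ha, hb, hc, hab, hac, hbc⟩ := Finset.two_lt_card_iff.mp hv
    have haC : a ∈ C' := (Finset.mem_filter.mp ha).1
    have hbC : b ∈ C' := (Finset.mem_filter.mp hb).1
    have hcC : c ∈ C' := (Finset.mem_filter.mp hc).1
    have haF : F1 (a 0) = v := (Finset.mem_filter.mp ha).2
    have hbF : F1 (b 0) = v := (Finset.mem_filter.mp hb).2
    have hcF : F1 (c 0) = v := (Finset.mem_filter.mp hc).2
    have tab : ∀ i, tl a i ≠ tl b i := hd3 a haC b hbC hab (haF.trans hbF.symm)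
    have tac : ∀ i, tl a i ≠ tl c i := hd3 a haC c hcC hac (haF.trans hcF.symm)
    have tbc : ∀ i, tl b i ≠ tl c i := hd3 b hbC c hcC hbc (hbF.trans hcF.symm)
    have hK3 : (C'.filter fun c => F1 (c 0) = v).card ≤ 3 := by
      have h := Finset.card_le_card_of_injOn (s := C'.filter fun c => F1 (c 0) = v) (t := univ) (fun k => tl k 0)
        (fun ⦃_⦄ _ =>
          Finset.mem_coe.mpr (mem_univ _)) ?_
      · rwa [card_univ, hA] at h
      · intro k hk k' hk' heq
        by_contra hne
        exact hd3 k (Finset.mem_filter.mp hk).1 k' (Finset.mem_filter.mp hk').1 hne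
          (((Finset.mem_filter.mp hk).2).trans ((Finset.mem_filter.mp hk').2).symm)
          0 heq
    have hrest : (C'.filter fun c => ¬ F1 (c 0) = v).card = 3 := by
      have h6 : (C'.filter fun c => F1 (c 0) = v).card +
          (C'.filter fun c => ¬ F1 (c 0) = v).card = C'.card :=
        Finset.card_filter_add_card_filter_not _
      rw [hC] at h6
      exact nk3 _ _ h6 hv hK3
    obtain ⟨d, hd', e, he', hde, hF1de⟩ :=
      Finset.exists_ne_map_eq_of_card_lt_of_maps_to
        (s := C'.filter fun c => ¬ F1 (c 0) = v) (t := (univ : Finset A).erase v)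
        (by rw [hrest, Finset.card_erase_of_mem (mem_univ v), card_univ, hA]
            norm_num)
        (f := fun c => F1 (c 0))
        (fun x hx => Finset.mem_erase.mpr ⟨(Finset.mem_filter.mp hx).2, mem_univ _⟩)
    have hdC : d ∈ C' := (Finset.mem_filter.mp hd').1
    have heC : e ∈ C' := (Finset.mem_filter.mp he').1
    have hdv : ¬ F1 (d 0) = v := (Finset.mem_filter.mp hd').2
    have hev : ¬ F1 (e 0) = v := (Finset.mem_filter.mp he').2
    have hda : d ≠ a := fun h => hdv (h ▸ haF)
    have hdb : d ≠ b := fun h => hdv (h ▸ hbF)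
    have hdc : d ≠ c := fun h => hdv (h ▸ hcF)
    have hea : e ≠ a := fun h => hev (h ▸ haF)
    have h_da : hammingDist (tl d) (tl a) ≤ 2 :=
      tri a haC b hbC c hcC d hdC tab tac tbc hda hdb hdc
    have h_db : hammingDist (tl d) (tl b) ≤ 2 :=
      tri b hbC a haC c hcC d hdC (fun i => (tab i).symm) tbc tac hdb hda hdc
    have h_dc : hammingDist (tl d) (tl c) ≤ 2 :=
      tri c hcC a haC b hbC d hdC (fun i => (tac i).symm) (fun i => (tbc i).symm)
        tab hdc hda hdb
    have h_ea : hammingDist (tl e) (tl a) ≤ 2 :=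
      tri a haC b hbC c hcC e heC tab tac tbc hea
        (fun h => hev (h ▸ hbF)) (fun h => hev (h ▸ hcF))
    obtain ⟨s1, hs1d, hs1a⟩ := hDmeet d hdC a haC hda h_da
    obtain ⟨s2, hs2d, hs2b⟩ := hDmeet d hdC b hbC hdb h_db
    obtain ⟨s3, hs3d, hs3c⟩ := hDmeet d hdC c hcC hdc h_dc
    obtain ⟨s4, hs4e, hs4a⟩ := hDmeet e heC a haC hea h_ea
    have Dab := hDdisj a haC b hbC hab (haF.trans hbF.symm)
    have Dac := hDdisj a haC c hcC hac (haF.trans hcF.symm)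
    have Dbc := hDdisj b hbC c hcC hbc (hbF.trans hcF.symm)
    have Dde := hDdisj d hdC e heC hde hF1de
    have h12 : s1 ≠ s2 := by
      intro h; subst h; exact Finset.disjoint_left.mp Dab hs1a hs2b
    have h13 : s1 ≠ s3 := by
      intro h; subst h; exact Finset.disjoint_left.mp Dac hs1a hs3c
    have h23 : s2 ≠ s3 := by
      intro h; subst h; exact Finset.disjoint_left.mp Dbc hs2b hs3c
    have h41 : s4 ≠ s1 := by
      intro h; subst h; exact Finset.disjoint_left.mp Dde hs1d hs4e
    have h42 : s4 ≠ s2 := by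
      intro h; subst h; exact Finset.disjoint_left.mp Dde hs2d hs4e
    have h43 : s4 ≠ s3 := by
      intro h; subst h; exact Finset.disjoint_left.mp Dde hs3d hs4e
    have hsub : ({s4, s1, s2, s3} : Finset (Fin 2 → A)) ⊆ S := by
      intro s hs
      simp only [Finset.mem_insert, Finset.mem_singleton] at hs
      rcases hs with rfl | rfl | rfl | rfl
      · exact hDS e hs4e
      · exact hDS d hs1d
      · exact hDS d hs2d
      · exact hDS d hs3d
    have hcard4 : ({s4, s1, s2, s3} : Finset (Fin 2 → A)).card = 4 := by
      rw [Finset.card_insert_of_notMem (by simp [h41, h42, h43]),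
        Finset.card_insert_of_notMem (by simp [h12, h13]),
        Finset.card_insert_of_notMem (by simp [h23]), Finset.card_singleton]
    have hle4 := Finset.card_le_card hsub
    rw [hcard4, hScard] at hle4
    exact absurd hle4 (by norm_num)
  · -- Case B
    replace hbig : ∀ v : A, (C'.filter fun c => F1 (c 0) = v).card < 3 :=
      fun v => Nat.lt_of_not_le (fun h => hbig ⟨v, h⟩)
    have fib2 : ∀ c ∈ C', (C'.filter fun w => F1 (w 0) = F1 (c 0)).card = 2 := by
      intro c hc
      have hle : (C'.filter fun w => F1 (w 0) = F1 (c 0)).card ≤ 2 :=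
        Nat.lt_succ_iff.mp (hbig (F1 (c 0)))
      have h6 : (C'.filter fun w => F1 (w 0) = F1 (c 0)).card +
          (C'.filter fun w => ¬ F1 (w 0) = F1 (c 0)).card = C'.card :=
        Finset.card_filter_add_card_filter_not _
      rw [hC] at h6
      have hmul := Finset.card_le_mul_card_image
        (f := fun w => F1 (w 0))
        (C'.filter fun w => ¬ F1 (w 0) = F1 (c 0)) 2
        (fun a _ => by
          have h1 : (((C'.filter fun w => ¬ F1 (w 0) = F1 (c 0)).filter
              fun w => F1 (w 0) = a)).card ≤
              (C'.filter fun w => F1 (w 0) = a).card :=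
            Finset.card_le_card (fun w hw => Finset.mem_filter.mpr
              ⟨(Finset.mem_filter.mp (Finset.mem_filter.mp hw).1).1,
               (Finset.mem_filter.mp hw).2⟩)
          exact h1.trans (Nat.lt_succ_iff.mp (hbig a)))
      have himle : (((C'.filter fun w => ¬ F1 (w 0) = F1 (c 0)).image
          fun w => F1 (w 0))).card ≤ 2 := by
        have hsub : (((C'.filter fun w => ¬ F1 (w 0) = F1 (c 0)).image
            fun w => F1 (w 0))) ⊆ (univ : Finset A).erase (F1 (c 0)) := by
          intro x hx
          obtain ⟨w, hw, hwx⟩ := Finset.mem_image.mp hx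
          exact Finset.mem_erase.mpr ⟨hwx ▸ (Finset.mem_filter.mp hw).2, mem_univ _⟩
        have hcle := Finset.card_le_card hsub
        rwa [Finset.card_erase_of_mem (mem_univ _), card_univ, hA] at hcle
      have hrle : (C'.filter fun w => ¬ F1 (w 0) = F1 (c 0)).card ≤ 2 * 2 :=
        hmul.trans (Nat.mul_le_mul (le_refl 2) himle)
      exact nk4 _ _ hle h6 hrle
    have pairup : ∀ c ∈ C', ∃ c' ∈ C', c' ≠ c ∧ F1 (c' 0) = F1 (c 0) ∧
        ∀ w ∈ C', F1 (w 0) = F1 (c 0) → w = c ∨ w = c' := by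
      intro c hc
      obtain ⟨x, y, hxy, hset⟩ := Finset.card_eq_two.mp (fib2 c hc)
      have hmem : ∀ w, w ∈ ({x, y} : Finset (Fin 4 → A)) ↔
          w ∈ C' ∧ F1 (w 0) = F1 (c 0) := by
        intro w; rw [← hset, Finset.mem_filter]
      have hcmem : c = x ∨ c = y := by
        have := (hmem c).mpr ⟨hc, rfl⟩
        simpa using this
      rcases hcmem with rfl | rfl
      · obtain ⟨hyC, hyF⟩ := (hmem y).mp (by simp)
        exact ⟨y, hyC, fun h => hxy h.symm, hyF, fun w hw hwF => by
          have := (hmem w).mpr ⟨hw, hwF⟩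
          simpa using this⟩
      · obtain ⟨hxC, hxF⟩ := (hmem x).mp (by simp)
        refine ⟨x, hxC, hxy, hxF, fun w hw hwF => ?_⟩
        have := (hmem w).mpr ⟨hw, hwF⟩
        simp only [Finset.mem_insert, Finset.mem_singleton] at this
        tauto
    have hDbig : ∀ x ∈ C', ∀ w1 ∈ C', ∀ w2 ∈ C', w1 ≠ w2 →
        F1 (w1 0) = F1 (w2 0) → F1 (w1 0) ≠ F1 (x 0) →
        hammingDist (tl x) (tl w1) ≤ 2 → hammingDist (tl x) (tl w2) ≤ 2 →
        2 ≤ (D x).card := by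
      intro x hx w1 hw1 w2 hw2 hne hFeq hFne hle1 hle2
      have hx1 : x ≠ w1 := fun h => hFne (by rw [h])
      have hx2 : x ≠ w2 := fun h => hFne (by rw [hFeq, h])
      obtain ⟨u1, hu1x, hu1w⟩ := hDmeet x hx w1 hw1 hx1 hle1
      obtain ⟨u2, hu2x, hu2w⟩ := hDmeet x hx w2 hw2 hx2 hle2
      have hu12 : u1 ≠ u2 := fun h =>
        Finset.disjoint_left.mp (hDdisj w1 hw1 w2 hw2 hne hFeq) hu1w (h ▸ hu2w)
      exact Finset.one_lt_card.mpr ⟨u1, hu1x, u2, hu2x, hu12⟩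
    have hDsmall : ∀ c ∈ C', ∀ c' ∈ C', c ≠ c' → F1 (c 0) = F1 (c' 0) →
        (D c).card ≤ 1 ∨ (D c').card ≤ 1 := by
      intro c hc c' hc' hne hF
      have hdisj' := hDdisj c hc c' hc' hne hF
      have hsub : D c ∪ D c' ⊆ S := Finset.union_subset (hDS c) (hDS c')
      have hcle := Finset.card_le_card hsub
      rw [Finset.card_union_of_disjoint hdisj', hScard] at hcle
      refine or_iff_not_imp_left.mpr fun h1 => ?_
      have h2 : 2 ≤ (D c).card := Nat.lt_of_not_le h1
      exact nk5 _ _ hcle h2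
    have light : ∀ c ∈ C', (D c).card ≤ 1 → ∀ w ∈ C', F1 (w 0) ≠ F1 (c 0) →
        ∃ w' ∈ C', F1 (w' 0) = F1 (w 0) ∧ ∀ i, tl c i ≠ tl w' i := by
      intro c hc hc1 w hw hne
      by_contra hcon
      obtain ⟨w2, hw2C, hw2ne, hw2F, _⟩ := pairup w hw
      have hle : ∀ w' ∈ C', F1 (w' 0) = F1 (w 0) →
          hammingDist (tl c) (tl w') ≤ 2 := by
        intro w' hw' hF'
        by_contra hgt
        exact hcon ⟨w', hw', hF', (hd_eq_three_iff _ _).mp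
          (nk2 _ (hd_le_three (tl c) (tl w')) hgt)⟩
      have h2 := hDbig c hc w hw w2 hw2C (Ne.symm hw2ne) hw2F.symm hne
        (hle w hw rfl) (hle w2 hw2C hw2F)
      exact Nat.not_succ_le_self 1 (le_trans h2 hc1)
    have hne6 : C'.Nonempty := by
      rw [← Finset.card_pos, hC]; norm_num
    obtain ⟨c1, hc1⟩ := hne6
    have hex2 : ∃ c2 ∈ C', F1 (c2 0) ≠ F1 (c1 0) := by
      by_contra h
      push_neg at h
      have := fib2 c1 hc1
      rw [Finset.filter_true_of_mem h, hC] at this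
      exact absurd this (by norm_num)
    obtain ⟨c2, hc2, hc21⟩ := hex2
    have hex3 : ∃ c3 ∈ C', F1 (c3 0) ≠ F1 (c1 0) ∧ F1 (c3 0) ≠ F1 (c2 0) := by
      by_contra h
      push_neg at h
      have hsub : C' ⊆ (C'.filter fun w => F1 (w 0) = F1 (c1 0)) ∪
          (C'.filter fun w => F1 (w 0) = F1 (c2 0)) := by
        intro w hw
        by_cases h1 : F1 (w 0) = F1 (c1 0)
        · exact Finset.mem_union_left _ (Finset.mem_filter.mpr ⟨hw, h1⟩)
        · exact Finset.mem_union_right _ (Finset.mem_filter.mpr ⟨hw, h w hw h1⟩)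
      have hcle := Finset.card_le_card hsub
      have hcu := Finset.card_union_le (C'.filter fun w => F1 (w 0) = F1 (c1 0))
        (C'.filter fun w => F1 (w 0) = F1 (c2 0))
      rw [hC] at hcle
      have e1 := fib2 c1 hc1
      have e2 := fib2 c2 hc2
      exact nk6 _ _ _ hcle hcu e1 e2
    obtain ⟨c3, hc3, hc31, hc32⟩ := hex3
    have getlight : ∀ c ∈ C', ∃ x ∈ C', F1 (x 0) = F1 (c 0) ∧ (D x).card ≤ 1 := by
      intro c hc
      obtain ⟨p, hpC, hpne, hpF, _⟩ := pairup c hc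
      rcases hDsmall c hc p hpC (Ne.symm hpne) hpF.symm with h | h
      · exact ⟨c, hc, rfl, h⟩
      · exact ⟨p, hpC, hpF, h⟩
    obtain ⟨x1, hx1C, hx1F, hx1D⟩ := getlight c1 hc1
    obtain ⟨x2, hx2C, hx2F, hx2D⟩ := getlight c2 hc2
    obtain ⟨x3, hx3C, hx3F, hx3D⟩ := getlight c3 hc3
    have cross3 : ∀ x ∈ C', ∀ y ∈ C', (D x).card ≤ 1 → (D y).card ≤ 1 →
        F1 (y 0) ≠ F1 (x 0) → ∀ i, tl x i ≠ tl y i := by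
      intro x hx y hy hxD hyD hne
      obtain ⟨w', hw'C, hw'F, hw'3⟩ := light x hx hxD y hy hne
      by_cases hwy : w' = y
      · exact hwy ▸ hw'3
      · obtain ⟨w'', hw''C, hw''F, hw''3⟩ := light y hy hyD x hx (Ne.symm hne)
        by_cases hwx : w'' = x
        · exact fun i => (hwx ▸ hw''3 i).symm
        · have hw''x : ∀ i, tl w'' i ≠ tl x i := hd3 w'' hw''C x hx hwx hw''F
          have hyw' : ∀ i, tl y i ≠ tl w' i :=
            hd3 y hy w' hw'C (Ne.symm hwy) hw'F.symm
          have hw''w' : w'' ≠ w' := fun h =>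
            hne (hw'F.symm.trans (h ▸ hw''F : F1 (w' 0) = F1 (x 0)))
          have hxy' : x ≠ y := fun h => hne (by rw [h])
          exact (L2 hA (tl x) (tl w'') (tl w') (tl y)
            hw''x (fun i => (hw'3 i).symm) hyw' hw''3
            (hd2 w'' hw''C w' hw'C hw''w') (hd2 x hx y hy hxy')).elim
    have hF21 : F1 (x2 0) ≠ F1 (x1 0) := by rw [hx2F, hx1F]; exact hc21
    have hF31 : F1 (x3 0) ≠ F1 (x1 0) := by rw [hx3F, hx1F]; exact hc31
    have hF32 : F1 (x3 0) ≠ F1 (x2 0) := by rw [hx3F, hx2F]; exact hc32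
    have t12 : ∀ i, tl x1 i ≠ tl x2 i := cross3 x1 hx1C x2 hx2C hx1D hx2D hF21
    have t13 : ∀ i, tl x1 i ≠ tl x3 i := cross3 x1 hx1C x3 hx3C hx1D hx3D hF31
    have t23 : ∀ i, tl x2 i ≠ tl x3 i := cross3 x2 hx2C x3 hx3C hx2D hx3D hF32
    obtain ⟨p1, hp1C, hp1ne, hp1F, _⟩ := pairup x1 hx1C
    have hp1x2 : p1 ≠ x2 := fun h => hF21 ((h ▸ hp1F : F1 (x2 0) = F1 (x1 0)))
    have hp1x3 : p1 ≠ x3 := fun h => hF31 ((h ▸ hp1F : F1 (x3 0) = F1 (x1 0)))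
    exact L1 hA (tl x1) (tl x2) (tl x3) (tl p1) t12 t13 t23
      (hd3 p1 hp1C x1 hx1C hp1ne hp1F)
      (hd2 p1 hp1C x2 hx2C hp1x2) (hd2 p1 hp1C x3 hx3C hp1x3)

theorem sigma_N2_3_eq_five :
    OneErrCorr 2 exampleCode13 ∧ exampleCode13.card = 5 ∧
      ∀ (A : Type) [Fintype A] [DecidableEq A], Fintype.card A = 3 →
        ∀ C' : Finset (Fin 4 → A), C'.card = 6 → ¬ OneErrCorr 2 C' := by
  refine ⟨⟨id, F2ex, by decide⟩, by decide,
    fun A _ _ hA C' hC => neg_part A hA C' hC⟩
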